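/- Let f : X → X be a chain-transitive homeomorphism of a compact connected metric space X, and let p : X̂ → X be a finite covering with X̂ compact and connected. If g : X̂ → X̂ is a lift of some iterate fⁿ (n ≥ 1), then g is chain-transitive. -/

import Mathlib

/-- `f` is chain-transitive: every point lies on a closed `ε`-chain for every `ε > 0`. -/
def IsChainTransitive {X : Type*} [MetricSpace X] (f : X → X) : Prop :=
  ∀ x : X, ∀ ε : ℝ, 0 < ε → ∃ (k : ℕ) (c : ℕ → X),
    c 0 = x ∧ c (k + 1) = x ∧ ∀ i ≤ k, dist (f (c i)) (c (i + 1)) < ε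

open Metric Set

/-- An `ε`-chain for `g` from `a` to `b` (of length at least 1). -/
def GChain {Y : Type*} [MetricSpace Y] (g : Y → Y) (ε : ℝ) (a b : Y) : Prop :=
  ∃ (k : ℕ) (c : ℕ → Y), c 0 = a ∧ c (k + 1) = b ∧ ∀ i ≤ k, dist (g (c i)) (c (i + 1)) < ε

lemma GChain.trans {Y : Type*} [MetricSpace Y] {g : Y → Y} {ε : ℝ} {a b c : Y}
    (h1 : GChain g ε a b) (h2 : GChain g ε b c) : GChain g ε a c := by
  obtain ⟨k1, c1, hc10, hc1e, hc1s⟩ := h1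
  obtain ⟨k2, c2, hc20, hc2e, hc2s⟩ := h2
  refine ⟨k1 + k2 + 1, fun t => if t ≤ k1 then c1 t else c2 (t - (k1 + 1)), by simp [hc10], ?_, ?_⟩
  · have : ¬ (k1 + k2 + 1 + 1 ≤ k1) := by omega
    simp only [this, if_false]
    have : k1 + k2 + 1 + 1 - (k1 + 1) = k2 + 1 := by omega
    rw [this, hc2e]
  · intro i hi
    rcases lt_trichotomy i k1 with h | h | h
    · have h1 : i ≤ k1 := h.le
      have h2 : i + 1 ≤ k1 := h
      simp only [h1, h2, if_true]
      exact hc1s i h.le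
    · subst h
      have h2 : ¬ (i + 1 ≤ i) := by omega
      simp only [le_refl, if_true, h2, if_false]
      have : i + 1 - (i + 1) = 0 := by omega
      rw [this, hc20, ← hc1e]
      exact hc1s i le_rfl
    · have h1 : ¬ (i ≤ k1) := by omega
      have h2 : ¬ (i + 1 ≤ k1) := by omega
      simp only [h1, h2, if_false]
      have e1 : i + 1 - (k1 + 1) = (i - (k1 + 1)) + 1 := by omega
      rw [e1]
      exact hc2s _ (by omega)

/-- Uniform separation of fibers for a local homeomorphism on a compact space. -/
lemma exists_fiber_sep {Y : Type*} {Z : Type*} [MetricSpace Y] [CompactSpace Y]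
    [TopologicalSpace Z] {p : Y → Z} (hp : IsLocalHomeomorph p) :
    ∃ r > 0, ∀ a b : Y, p a = p b → dist a b < r → a = b := by
  choose e he hpe using hp
  obtain ⟨r, hr, hball⟩ := lebesgue_number_lemma_of_metric (s := (univ : Set Y))
    isCompact_univ (fun w => (e w).open_source) (fun w _ => mem_iUnion.mpr ⟨w, he w⟩)
  refine ⟨r, hr, fun a b hpab hd => ?_⟩
  obtain ⟨w, hw⟩ := hball a (mem_univ a)
  have ha : a ∈ (e w).source := hw (mem_ball_self hr)
  have hb : b ∈ (e w).source := hw (by rwa [mem_ball, dist_comm])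
  have : e w a = e w b := by rw [← hpe w] at *; exact hpab
  exact (e w).injOn ha hb this

/-- Uniform local lifting for a local homeomorphism on a compact space. -/
lemma exists_lift_mod {Y : Type*} {Z : Type*} [MetricSpace Y] [CompactSpace Y]
    [MetricSpace Z] {p : Y → Z} (hp : IsLocalHomeomorph p) (hc : Continuous p)
    {ε : ℝ} (hε : 0 < ε) :
    ∃ δ > 0, ∀ (w : Y) (x : Z), dist (p w) x < δ → ∃ w', p w' = x ∧ dist w w' < ε := by
  choose e he hpe using hp
  -- for each w, choose ρ w > 0 with ball (p w) (ρ w) ⊆ target and symm maps it into ball w (ε/2)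
  have key : ∀ w : Y, ∃ ρ > 0, ball (p w) ρ ⊆ (e w).target ∧
      ∀ x ∈ ball (p w) ρ, dist ((e w).symm x) w < ε / 2 := by
    intro w
    have hmem : p w ∈ (e w).target := by
      rw [hpe w]; exact (e w).map_source (he w)
    have hcont : ContinuousAt (e w).symm (p w) :=
      ((e w).continuousAt_symm hmem)
    rw [Metric.continuousAt_iff] at hcont
    obtain ⟨ρ1, hρ1, hρ1p⟩ := hcont (ε / 2) (by linarith)
    obtain ⟨ρ2, hρ2, hρ2s⟩ := Metric.isOpen_iff.mp (e w).open_target _ hmem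
    refine ⟨min ρ1 ρ2, lt_min hρ1 hρ2, fun x hx =>
      hρ2s (mem_ball.mpr (lt_of_lt_of_le (mem_ball.mp hx) (min_le_right _ _))), fun x hx => ?_⟩
    have := hρ1p (lt_of_lt_of_le (mem_ball.mp hx) (min_le_left _ _))
    have hsw : (e w).symm (p w) = w := by
      rw [hpe w]; exact (e w).left_inv (he w)
    rwa [hsw] at this
  choose ρ hρ hρt hρs using key
  -- cover Y by W w := p⁻¹(ball (p w) (ρ w / 2)) ∩ ball w (ε/2), take finite subcover
  have hcover : (univ : Set Y) ⊆ ⋃ w, (p ⁻¹' ball (p w) (ρ w / 2)) ∩ ball w (ε / 2) := by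
    intro u _
    exact mem_iUnion.mpr ⟨u, by simp [mem_ball_self, half_pos (hρ u), half_pos hε]⟩
  obtain ⟨T, hT⟩ := isCompact_univ.elim_finite_subcover
    (fun w => (p ⁻¹' ball (p w) (ρ w / 2)) ∩ ball w (ε / 2))
    (fun w => ((isOpen_ball.preimage hc).inter isOpen_ball)) hcover
  rcases isEmpty_or_nonempty Y with hY | hY
  · exact ⟨1, one_pos, fun w => (IsEmpty.false w).elim⟩
  have hTe : T.Nonempty := by
    by_contra hTn
    rw [Finset.not_nonempty_iff_eq_empty] at hTn
    subst hTn
    obtain ⟨u⟩ := hY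
    simpa using hT (mem_univ u)
  refine ⟨T.inf' hTe (fun w => ρ w / 2), ?_, ?_⟩
  · exact (Finset.lt_inf'_iff _).mpr fun w _ => half_pos (hρ w)
  · intro u x hd
    have hmem := hT (mem_univ u)
    simp only [mem_iUnion, mem_inter_iff, Finset.mem_coe, mem_preimage] at hmem
    obtain ⟨w, hwT, hu1, hu2⟩ := hmem
    have hδw : dist (p u) x < ρ w / 2 :=
      lt_of_lt_of_le hd (Finset.inf'_le _ hwT)
    have hxw : x ∈ ball (p w) (ρ w) := by
      rw [mem_ball]
      calc dist x (p w) ≤ dist x (p u) + dist (p u) (p w) := dist_triangle _ _ _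
      _ < ρ w / 2 + ρ w / 2 := by
          rw [dist_comm] at hδw
          exact add_lt_add hδw (mem_ball.mp hu1)
      _ = ρ w := by ring
    refine ⟨(e w).symm x, ?_, ?_⟩
    · have h2 : (e w) ((e w).symm x) = x := (e w).right_inv (hρt w hxw)
      rw [← hpe w] at h2; exact h2
    · calc dist u ((e w).symm x) ≤ dist u w + dist w ((e w).symm x) := dist_triangle _ _ _
      _ < ε / 2 + ε / 2 := by
          refine add_lt_add (mem_ball.mp hu2) ?_
          rw [dist_comm]; exact hρs w x hxw
      _ = ε := by ring

/-- Error tracking modulus along chains. -/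
lemma exists_chain_modulus {X : Type*} [MetricSpace X] [CompactSpace X]
    {f : X → X} (hf : Continuous f) (m : ℕ) {δ : ℝ} (hδ : 0 < δ) :
    ∃ η > 0, η ≤ δ ∧ ∀ (c : ℕ → X), (∀ i, dist (f (c i)) (c (i + 1)) < η) →
      ∀ j, dist (f^[m] (c j)) (c (j + m)) < δ := by
  induction m generalizing δ with
  | zero => exact ⟨δ, hδ, le_rfl, fun c _ j => by simpa using hδ⟩
  | succ m ih =>
    have huc : UniformContinuous f := CompactSpace.uniformContinuous_of_continuous hf
    rw [Metric.uniformContinuous_iff] at huc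
    obtain ⟨θ, hθ, hθp⟩ := huc (δ / 2) (by linarith)
    obtain ⟨η1, hη1, hη1le, hη1p⟩ := ih (δ := min θ (δ / 2)) (lt_min hθ (by linarith))
    refine ⟨η1, hη1, le_trans hη1le (le_trans (min_le_right _ _) (by linarith)), fun c hc j => ?_⟩
    have h1 : dist (f^[m] (c j)) (c (j + m)) < θ :=
      lt_of_lt_of_le (hη1p c hc j) (min_le_left _ _)
    calc dist (f^[m + 1] (c j)) (c (j + (m + 1)))
        ≤ dist (f (f^[m] (c j))) (f (c (j + m))) + dist (f (c (j + m))) (c (j + m + 1)) := by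
          rw [Function.iterate_succ_apply']
          exact dist_triangle _ _ _
      _ < δ / 2 + δ / 2 := add_lt_add (hθp h1)
          (lt_of_lt_of_le (hc (j + m)) (le_trans hη1le (min_le_right _ _)))
      _ = δ := by ring

/-- A closed chain extends to a periodic infinite chain. -/
lemma periodic_chain {X : Type*} [MetricSpace X] {f : X → X} {η : ℝ} {k : ℕ} {c : ℕ → X}
    (hce : c (k + 1) = c 0) (hcs : ∀ i ≤ k, dist (f (c i)) (c (i + 1)) < η) :
    (∀ i, dist (f ((fun i => c (i % (k + 1))) i)) ((fun i => c (i % (k + 1))) (i + 1)) < η)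
    ∧ ∀ a, (fun i => c (i % (k + 1))) (a * (k + 1)) = c 0 := by
  constructor
  · intro i
    simp only
    have hlt : i % (k + 1) < k + 1 := Nat.mod_lt _ (Nat.succ_pos k)
    rcases Nat.lt_or_ge (i % (k + 1)) k with h | h
    · have e1 : i + 1 = (i % (k + 1) + 1) + (k + 1) * (i / (k + 1)) := by
        have := Nat.mod_add_div i (k + 1); omega
      have : (i + 1) % (k + 1) = i % (k + 1) + 1 := by
        rw [e1, Nat.add_mul_mod_self_left, Nat.mod_eq_of_lt (by omega)]
      rw [this]
      exact hcs _ h.le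
    · have heq : i % (k + 1) = k := by omega
      have : (i + 1) % (k + 1) = 0 := by
        have e1 : i + 1 = (k + 1) + (k + 1) * (i / (k + 1)) := by
          have := Nat.mod_add_div i (k + 1); omega
        rw [e1, Nat.add_mul_mod_self_left, Nat.mod_self]
      rw [this, heq, ← hce]
      exact hcs k le_rfl
  · intro a
    simp [Nat.mul_mod_left]

/-- Iterates of chain-transitive maps are chain-transitive at each point. -/
lemma isChainTransitive_iterate {X : Type*} [MetricSpace X] [CompactSpace X]
    {f : X → X} (hfc : Continuous f) (hf : IsChainTransitive f) (n : ℕ) :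
    IsChainTransitive f^[n] := by
  intro x δ hδ
  obtain ⟨η, hη, hηle, hηp⟩ := exists_chain_modulus hfc n hδ
  obtain ⟨k, c, hc0, hce, hcs⟩ := hf x η hη
  rw [← hc0] at hce
  obtain ⟨hper, hmul⟩ := periodic_chain hce hcs
  refine ⟨k, fun j => c ((j * n) % (k + 1)), by simpa using hc0, ?_, ?_⟩
  · show c ((k + 1) * n % (k + 1)) = x
    rw [Nat.mul_mod_right]
    exact hc0
  · intro j _
    have h2 := hηp (fun i => c (i % (k + 1))) hper (j * n)
    show dist (f^[n] (c (j * n % (k + 1)))) (c ((j + 1) * n % (k + 1))) < δ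
    have harr : (j + 1) * n = j * n + n := by ring
    rw [harr]
    exact h2

/-- If `f` is a chain-transitive homeomorphism of a compact connected metric space,
`p : X̂ → X` is a finite covering of compact connected metric spaces, and `g` is a lift
of the iterate `f^[n]` (`n ≥ 1`) to `X̂`, then `g` is chain-transitive. -/
theorem lift_of_iterate_isChainTransitive
    {X X' : Type*} [MetricSpace X] [CompactSpace X] [ConnectedSpace X]
    [MetricSpace X'] [CompactSpace X'] [ConnectedSpace X']
    (p : X' → X) (hp : IsCoveringMap p) (hsurj : Function.Surjective p)
    (hfin : ∀ x : X, (p ⁻¹' {x}).Finite)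
    (f : X ≃ₜ X) (hf : IsChainTransitive ⇑f)
    (n : ℕ) (hn : 1 ≤ n)
    (g : X' ≃ₜ X') (hlift : ∀ z : X', p (g z) = (⇑f)^[n] (p z)) :
    IsChainTransitive ⇑g := by
  classical
  intro z ε hε
  obtain ⟨r, hr, hsep⟩ := exists_fiber_sep hp.isLocalHomeomorph
  set ε' : ℝ := min ε (r / 3) with hε'def
  have hε'pos : 0 < ε' := lt_min hε (by linarith)
  have hε'ε : ε' ≤ ε := min_le_left _ _
  have hε'r : ε' ≤ r / 3 := min_le_right _ _
  obtain ⟨δ, hδ, hlifting⟩ := exists_lift_mod hp.isLocalHomeomorph hp.continuous hε'pos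
  obtain ⟨k, c, hc0, hce, hcs⟩ := isChainTransitive_iterate f.continuous hf n (p z) δ hδ
  -- lifting of the base chain starting at any point of the fiber over `p z`
  have hliftchain : ∀ w : X', p w = p z → ∃ d : ℕ → X', d 0 = w ∧ d (k + 1) = d (k + 1) ∧
      (∀ i ≤ k + 1, p (d i) = c i) ∧ (∀ i ≤ k, dist (g (d i)) (d (i + 1)) < ε') := by
    intro w hw
    have main : ∀ j, j ≤ k + 1 → ∃ d : ℕ → X', d 0 = w ∧
        (∀ i ≤ j, p (d i) = c i) ∧ (∀ i < j, dist (g (d i)) (d (i + 1)) < ε') := by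
      intro j
      induction j with
      | zero =>
        intro _
        refine ⟨fun _ => w, rfl, fun i hi => ?_, fun i hi => by omega⟩
        rw [Nat.le_zero.mp hi, hw, hc0]
      | succ j ihj =>
        intro hj
        obtain ⟨d, hd0, hd2, hd3⟩ := ihj (by omega)
        have hstep : dist (p (g (d j))) (c (j + 1)) < δ := by
          rw [hlift (d j), hd2 j le_rfl]
          exact hcs j (by omega)
        obtain ⟨w', hw'p, hw'd⟩ := hlifting (g (d j)) (c (j + 1)) hstep
        refine ⟨fun i => if i ≤ j then d i else w', by simp [hd0], fun i hi => ?_, fun i hi => ?_⟩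
        · by_cases hij : i ≤ j
          · simp only [hij, if_true]; exact hd2 i hij
          · have hieq : i = j + 1 := by omega
            subst hieq
            simp only [if_neg hij]
            exact hw'p
        · rcases Nat.lt_or_ge i j with hij | hij
          · have h1 : i ≤ j := hij.le
            have h2 : i + 1 ≤ j := hij
            simp only [h1, h2, if_true]
            exact hd3 i hij
          · have hieq : i = j := by omega
            subst hieq
            have h2 : ¬ (i + 1 ≤ i) := by omega
            simp only [le_refl, if_true, h2, if_false]
            exact hw'd
    obtain ⟨d, hd0, hd2, hd3⟩ := main (k + 1) le_rfl
    exact ⟨d, hd0, rfl, hd2, fun i hi => hd3 i (by omega)⟩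
  -- backward uniqueness of lifts
  have huniq : ∀ d e : ℕ → X',
      (∀ i ≤ k + 1, p (d i) = c i) → (∀ i ≤ k, dist (g (d i)) (d (i + 1)) < ε') →
      (∀ i ≤ k + 1, p (e i) = c i) → (∀ i ≤ k, dist (g (e i)) (e (i + 1)) < ε') →
      d (k + 1) = e (k + 1) → d 0 = e 0 := by
    intro d e hd2 hd3 he2 he3 hend
    have main : ∀ j, j ≤ k + 1 → d (k + 1 - j) = e (k + 1 - j) := by
      intro j
      induction j with
      | zero => intro _; simpa using hend
      | succ j ihj =>
        intro hj
        have hih := ihj (by omega)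
        have hik : k + 1 - j = (k - j) + 1 := by omega
        have hi : k - j ≤ k := by omega
        rw [hik] at hih
        have h1 : dist (g (d (k - j))) (g (e (k - j))) < r := by
          calc dist (g (d (k - j))) (g (e (k - j)))
              ≤ dist (g (d (k - j))) (d (k - j + 1)) + dist (d (k - j + 1)) (g (e (k - j))) :=
                dist_triangle _ _ _
            _ < ε' + ε' := by
                refine add_lt_add (hd3 _ hi) ?_
                rw [hih, dist_comm]
                exact he3 _ hi
            _ ≤ r / 3 + r / 3 := add_le_add hε'r hε'r
            _ < r := by linarith
        have h2 : p (g (d (k - j))) = p (g (e (k - j))) := by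
          rw [hlift, hlift, hd2 _ (by omega), he2 _ (by omega)]
        have hde : d (k - j) = e (k - j) := g.injective (hsep _ _ h2 h1)
        have hkk : k + 1 - (j + 1) = k - j := by omega
        rw [hkk]
        exact hde
    simpa using main (k + 1) le_rfl
  -- the holonomy map of the chain on the fiber over `p z`
  obtain ⟨h, hh⟩ : ∃ h : X' → X', ∀ w, p w = p z →
      ∃ d : ℕ → X', d 0 = w ∧ d (k + 1) = h w ∧
        (∀ i ≤ k + 1, p (d i) = c i) ∧ (∀ i ≤ k, dist (g (d i)) (d (i + 1)) < ε') := by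
    choose h' hh' using hliftchain
    refine ⟨fun w => if hw : p w = p z then h' w hw (k + 1) else z, fun w hw => ?_⟩
    obtain ⟨h1, _, h3, h4⟩ := hh' w hw
    exact ⟨h' w hw, h1, by beta_reduce; rw [dif_pos hw], h3, h4⟩
  have horb : ∀ j, p (h^[j] z) = p z := by
    intro j
    induction j with
    | zero => rfl
    | succ j ih =>
      rw [Function.iterate_succ_apply']
      obtain ⟨d, _, hdend, hdfib, _⟩ := hh _ ih
      rw [← hdend, hdfib (k + 1) le_rfl, hce]
  -- injectivity cancellation on the orbit
  have hcancel : ∀ a m, h^[a] z = h^[a + m] z → z = h^[m] z := by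
    intro a
    induction a with
    | zero => intro m hm; simpa using hm
    | succ a ih =>
      intro m hm
      apply ih
      rw [show a + 1 + m = (a + m) + 1 from by omega] at hm
      rw [Function.iterate_succ_apply', Function.iterate_succ_apply'] at hm
      obtain ⟨d, hd0, hdend, hd2, hd3⟩ := hh _ (horb a)
      obtain ⟨e, he0, heend, he2, he3⟩ := hh _ (horb (a + m))
      rw [hm, ← heend] at hdend
      have := huniq d e hd2 hd3 he2 he3 hdend
      rw [hd0, he0] at this
      exact this
  -- the orbit revisits `z`
  have hret : ∃ m, 1 ≤ m ∧ z = h^[m] z := by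
    obtain ⟨a, -, b, -, hab, he⟩ := Set.infinite_univ.exists_ne_map_eq_of_mapsTo
      (f := fun j : ℕ => h^[j] z) (t := p ⁻¹' {p z})
      (fun j _ => by simp only [Set.mem_preimage, Set.mem_singleton_iff]; exact horb j)
      (hfin (p z))
    rcases Ne.lt_or_gt hab with hlt | hlt
    · exact ⟨b - a, by omega, hcancel a (b - a) (by rw [show a + (b - a) = b from by omega]; exact he)⟩
    · exact ⟨a - b, by omega, hcancel b (a - b)
        (by rw [show b + (a - b) = a from by omega]; exact he.symm)⟩
  -- concatenate chains along the orbit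
  have hRchain : ∀ w, p w = p z → GChain (⇑g) ε' w (h w) := by
    intro w hw
    obtain ⟨d, hd0, hdend, _, hd3⟩ := hh w hw
    exact ⟨k, d, hd0, hdend, hd3⟩
  have hchain : ∀ j, 1 ≤ j → GChain (⇑g) ε' z (h^[j] z) := by
    intro j
    induction j with
    | zero => omega
    | succ j ihj =>
      intro _
      rcases Nat.eq_zero_or_pos j with hj0 | hj0
      · subst hj0
        simpa using hRchain z rfl
      · exact (ihj hj0).trans (by
          rw [Function.iterate_succ_apply']
          exact hRchain _ (horb j))
  obtain ⟨m, hm1, hzm⟩ := hret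
  obtain ⟨K, C, hC0, hCe, hCs⟩ := hchain m hm1
  exact ⟨K, C, hC0, by rw [hCe, ← hzm], fun i hi => lt_of_lt_of_le (hCs i hi) hε'ε⟩
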